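/- Let X be a finite set with |X| = n and let a : X × X → ℂ be any matrix with zero diagonal. Then (2π)^{-n} ∫_{[0,2π]^n} exp( Σ_{x≠y} a_{x,y} e^{i(θ_x − θ_y)} ) ∏_{x∈X} dθ_x = Σ_{k Eulerian network on X} ∏_{x≠y} a_{x,y}^{k_{x,y}} / k_{x,y}! , where both sides converge absolutely. -/

import Mathlib

open scoped BigOperators


lemma hasSum_pi_prod_fin {R : Type*} [NormedField R] [CompleteSpace R] (n : ℕ) :
    ∀ (f : Fin n → ℕ → R) (s : Fin n → R),
    (∀ i, HasSum (f i) (s i)) → (∀ i, Summable fun m => ‖f i m‖) →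
    HasSum (fun k : Fin n → ℕ => ∏ i, f i (k i)) (∏ i, s i) ∧
      Summable (fun k : Fin n → ℕ => ∏ i, ‖f i (k i)‖) := by
  induction n with
  | zero =>
    intro f s _ _
    constructor
    · have h1 : HasSum (fun k : Fin 0 → ℕ => ∏ i, f i (k i))
          ((fun k : Fin 0 → ℕ => ∏ i, f i (k i)) default) :=
        hasSum_single default (fun b hb => absurd (Subsingleton.elim b default) hb)
      simpa using h1
    · have h1 : HasSum (fun k : Fin 0 → ℕ => ∏ i, ‖f i (k i)‖)
          ((fun k : Fin 0 → ℕ => ∏ i, ‖f i (k i)‖) default) :=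
        hasSum_single default (fun b hb => absurd (Subsingleton.elim b default) hb)
      exact h1.summable
  | succ n ih =>
    intro f s h hn
    obtain ⟨ih1, ih2⟩ := ih (fun i => f i.succ) (fun i => s i.succ)
      (fun i => h i.succ) (fun i => hn i.succ)
    have hnorm : Summable (fun p : ℕ × (Fin n → ℕ) =>
        ‖f 0 p.1‖ * ∏ i, ‖f (Fin.succ i) (p.2 i)‖) := by
      apply Summable.mul_of_nonneg (hn 0) ih2
      · intro m; exact norm_nonneg _
      · intro k; exact Finset.prod_nonneg fun i _ => norm_nonneg _
    have hsum : Summable (fun p : ℕ × (Fin n → ℕ) =>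
        f 0 p.1 * ∏ i, f (Fin.succ i) (p.2 i)) := by
      refine Summable.of_norm_bounded hnorm ?_
      intro p
      simp [norm_mul, norm_prod, le_refl]
    have key : HasSum (fun p : ℕ × (Fin n → ℕ) => f 0 p.1 * ∏ i, f (Fin.succ i) (p.2 i))
        (s 0 * ∏ i : Fin n, s (Fin.succ i)) := by
      apply HasSum.mul (h 0) ih1 hsum
    let e : (ℕ × (Fin n → ℕ)) ≃ (Fin (n+1) → ℕ) := Fin.consEquiv (fun _ => ℕ)
    have hcomp : ((fun k : Fin (n+1) → ℕ => ∏ i, f i (k i)) ∘ e)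
        = fun p : ℕ × (Fin n → ℕ) => f 0 p.1 * ∏ i, f (Fin.succ i) (p.2 i) := by
      funext p
      simp [e, Fin.consEquiv, Fin.prod_univ_succ]
    have hcompn : ((fun k : Fin (n+1) → ℕ => ∏ i, ‖f i (k i)‖) ∘ e)
        = fun p : ℕ × (Fin n → ℕ) => ‖f 0 p.1‖ * ∏ i, ‖f (Fin.succ i) (p.2 i)‖ := by
      funext p
      simp [e, Fin.consEquiv, Fin.prod_univ_succ]
    constructor
    · rw [← e.hasSum_iff, hcomp, Fin.prod_univ_succ]
      exact key
    · rw [← e.summable_iff, hcompn]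
      exact hnorm

lemma hasSum_pi_prod {R : Type*} [NormedField R] [CompleteSpace R]
    {ι : Type*} [Fintype ι] (f : ι → ℕ → R) (s : ι → R)
    (h : ∀ i, HasSum (f i) (s i)) (hn : ∀ i, Summable fun m => ‖f i m‖) :
    HasSum (fun k : ι → ℕ => ∏ i, f i (k i)) (∏ i, s i) := by
  let e := (Fintype.equivFin ι).symm
  obtain ⟨h1, -⟩ := hasSum_pi_prod_fin (Fintype.card ι) (fun j => f (e j)) (fun j => s (e j))
    (fun j => h _) (fun j => hn _)
  let e2 : (Fin (Fintype.card ι) → ℕ) ≃ (ι → ℕ) := e.arrowCongr (Equiv.refl ℕ)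
  rw [← e2.hasSum_iff]
  have hcomp : ((fun k : ι → ℕ => ∏ i, f i (k i)) ∘ e2)
      = fun g : Fin (Fintype.card ι) → ℕ => ∏ j, f (e j) (g j) := by
    funext g
    rw [Function.comp_apply, ← e.prod_comp (fun i => f i (e2 g i))]
    refine Finset.prod_congr rfl fun j _ => ?_
    simp [e2, Equiv.arrowCongr]
  rw [hcomp, ← e.prod_comp s]
  exact h1

lemma hasSum_expand {𝕜 : Type*} [RCLike 𝕜] {X : Type*} [Fintype X] (w : X → X → 𝕜) :
    HasSum (fun k : X → X → ℕ => ∏ x, ∏ y, w x y ^ k x y / (Nat.factorial (k x y) : 𝕜))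
      (∏ x, ∏ y, NormedSpace.exp (w x y)) := by
  have h := hasSum_pi_prod (ι := X × X)
    (fun p m => w p.1 p.2 ^ m / (Nat.factorial m : 𝕜))
    (fun p => NormedSpace.exp (w p.1 p.2))
    (fun p => NormedSpace.expSeries_div_hasSum_exp (w p.1 p.2))
    (fun p => by
      simpa [norm_div, norm_pow] using Real.summable_pow_div_factorial ‖w p.1 p.2‖)
  let e : (X × X → ℕ) ≃ (X → X → ℕ) := Equiv.curry X X ℕ
  rw [← e.hasSum_iff]
  have hcomp : ((fun k : X → X → ℕ =>
        ∏ x, ∏ y, w x y ^ k x y / (Nat.factorial (k x y) : 𝕜)) ∘ e)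
      = fun K : X × X → ℕ => ∏ p : X × X, w p.1 p.2 ^ K p / (Nat.factorial (K p) : 𝕜) := by
    funext K
    exact (Fintype.prod_prod_type' (f := fun x y => w x y ^ K (x, y) / (Nat.factorial (K (x, y)) : 𝕜))).symm
  rw [hcomp, show (∏ x, ∏ y, NormedSpace.exp (w x y))
      = ∏ p : X × X, NormedSpace.exp (w p.1 p.2) from
      (Fintype.prod_prod_type' (f := fun x y => NormedSpace.exp (w x y))).symm]
  exact h

open MeasureTheory

section scratch
variable {X : Type*} [Fintype X] [DecidableEq X]

-- netD
noncomputable def netD (k : X → X → ℕ) (x : X) : ℤ := (∑ y, k x y : ℕ) - (∑ y, k y x : ℕ)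

lemma key_sum_id (k : X → X → ℕ) (θ : X → ℝ) :
    ∑ x, ∑ y, (k x y : ℂ) * (Complex.I * ((θ x : ℂ) - (θ y : ℂ)))
      = ∑ x, Complex.I * (netD k x : ℂ) * (θ x : ℂ) := by
  simp only [mul_sub, Finset.sum_sub_distrib]
  have h2 : ∑ x, ∑ y, (k x y : ℂ) * (Complex.I * (θ y : ℂ))
      = ∑ x, ∑ y, (k y x : ℂ) * (Complex.I * (θ x : ℂ)) := Finset.sum_comm
  rw [h2, ← Finset.sum_sub_distrib]
  refine Finset.sum_congr rfl fun x _ => ?_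
  rw [← Finset.sum_sub_distrib]
  have : ∀ y, (k x y : ℂ) * (Complex.I * (θ x : ℂ)) - (k y x : ℂ) * (Complex.I * (θ x : ℂ))
      = ((k x y : ℂ) - (k y x : ℂ)) * (Complex.I * (θ x : ℂ)) := fun y => by ring
  simp only [this, ← Finset.sum_mul]
  have : ((netD k x : ℤ) : ℂ) = (∑ y, (k x y : ℂ)) - ∑ y, (k y x : ℂ) := by
    simp only [netD]
    push_cast
    ring
  rw [Finset.sum_sub_distrib]  -- ∑ (kxy - kyx) = ∑kxy - ∑kyx
  rw [← this]
  ring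
end scratch

section scratch2
variable {X : Type*} [Fintype X] [DecidableEq X]

lemma F_eq (a : Matrix X X ℂ) (k : X → X → ℕ) (θ : X → ℝ) :
    (∏ x, ∏ y, (a x y * Complex.exp (Complex.I * ((θ x : ℂ) - (θ y : ℂ)))) ^ k x y
        / (Nat.factorial (k x y) : ℂ))
      = (∏ x, ∏ y, a x y ^ k x y / (Nat.factorial (k x y) : ℂ)) *
        ∏ x, Complex.exp (Complex.I * (netD k x : ℂ) * (θ x : ℂ)) := by
  calc (∏ x, ∏ y, (a x y * Complex.exp (Complex.I * ((θ x : ℂ) - (θ y : ℂ)))) ^ k x y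
        / (Nat.factorial (k x y) : ℂ))
      = ∏ x, ∏ y, (a x y ^ k x y / (Nat.factorial (k x y) : ℂ)
          * Complex.exp ((k x y : ℂ) * (Complex.I * ((θ x : ℂ) - (θ y : ℂ))))) := by
        refine Finset.prod_congr rfl fun x _ => Finset.prod_congr rfl fun y _ => ?_
        rw [mul_pow, mul_div_right_comm, Complex.exp_nat_mul]
    _ = (∏ x, ∏ y, a x y ^ k x y / (Nat.factorial (k x y) : ℂ)) *
        ∏ x, ∏ y, Complex.exp ((k x y : ℂ) * (Complex.I * ((θ x : ℂ) - (θ y : ℂ)))) := by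
        simp only [Finset.prod_mul_distrib]
    _ = (∏ x, ∏ y, a x y ^ k x y / (Nat.factorial (k x y) : ℂ)) *
        Complex.exp (∑ x, ∑ y, (k x y : ℂ) * (Complex.I * ((θ x : ℂ) - (θ y : ℂ)))) := by
        congr 1
        simp only [← Complex.exp_sum]
    _ = (∏ x, ∏ y, a x y ^ k x y / (Nat.factorial (k x y) : ℂ)) *
        ∏ x, Complex.exp (Complex.I * (netD k x : ℂ) * (θ x : ℂ)) := by
        rw [key_sum_id, Complex.exp_sum]

end scratch2

lemma integral_factor (m : ℤ) :
    (∫ t in Set.Icc (0:ℝ) (2*Real.pi), Complex.exp (Complex.I * (m : ℂ) * (t : ℂ)))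
      = if m = 0 then ((2*Real.pi : ℝ) : ℂ) else 0 := by
  rw [MeasureTheory.integral_Icc_eq_integral_Ioc,
    ← intervalIntegral.integral_of_le (by positivity : (0:ℝ) ≤ 2*Real.pi)]
  by_cases hm : m = 0
  · simp [hm]
  · rw [if_neg hm]
    have hc : (Complex.I * (m : ℂ)) ≠ 0 :=
      mul_ne_zero Complex.I_ne_zero (by exact_mod_cast hm)
    rw [integral_exp_mul_complex hc]
    have h1 : Complex.exp (Complex.I * (m : ℂ) * ((2*Real.pi : ℝ) : ℂ)) = 1 := by
      rw [show Complex.I * (m : ℂ) * ((2*Real.pi : ℝ) : ℂ)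
          = (m : ℂ) * (2 * (Real.pi : ℂ) * Complex.I) by push_cast; ring]
      exact Complex.exp_int_mul_two_pi_mul_I m
    rw [show ((2*Real.pi : ℝ) : ℂ) = 2 * (Real.pi : ℂ) by push_cast; ring] at h1
    simp [h1]

section scratch3
variable {X : Type*} [Fintype X] [DecidableEq X]

lemma integral_prod_eval (g : X → ℝ → ℂ) (hg : ∀ x, Continuous (g x)) :
    (∫ θ : X → ℝ in Set.univ.pi (fun _ : X => Set.Icc (0:ℝ) (2*Real.pi)),
        ∏ x, g x (θ x))
      = ∏ x, ∫ t in Set.Icc (0:ℝ) (2*Real.pi), g x t := by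
  rw [← MeasureTheory.integral_indicator (MeasurableSet.univ_pi fun _ => measurableSet_Icc)]
  have hind : (Set.univ.pi (fun _ : X => Set.Icc (0:ℝ) (2*Real.pi))).indicator
        (fun θ : X → ℝ => ∏ x, g x (θ x))
      = fun θ : X → ℝ => ∏ x, (Set.Icc (0:ℝ) (2*Real.pi)).indicator (g x) (θ x) := by
    funext θ
    by_cases hθ : θ ∈ Set.univ.pi (fun _ : X => Set.Icc (0:ℝ) (2*Real.pi))
    · rw [Set.indicator_of_mem hθ]
      refine Finset.prod_congr rfl fun x _ => ?_
      rw [Set.indicator_of_mem (hθ x (Set.mem_univ x))]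
    · rw [Set.indicator_of_notMem hθ]
      rw [Set.mem_pi] at hθ
      simp only [Set.mem_univ, true_implies] at hθ
      push_neg at hθ
      obtain ⟨x, hx⟩ := hθ
      exact (Finset.prod_eq_zero (Finset.mem_univ x) (Set.indicator_of_notMem hx _)).symm
  rw [hind, MeasureTheory.integral_fintype_prod_volume_eq_prod
    (fun x t => (Set.Icc (0:ℝ) (2*Real.pi)).indicator (g x) t)]
  exact Finset.prod_congr rfl fun x _ => MeasureTheory.integral_indicator measurableSet_Icc

lemma integral_F (a : Matrix X X ℂ) (k : X → X → ℕ) :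
    (∫ θ : X → ℝ in Set.univ.pi (fun _ : X => Set.Icc (0:ℝ) (2*Real.pi)),
        ∏ x, ∏ y, (a x y * Complex.exp (Complex.I * ((θ x : ℂ) - (θ y : ℂ)))) ^ k x y
          / (Nat.factorial (k x y) : ℂ))
      = (∏ x, ∏ y, a x y ^ k x y / (Nat.factorial (k x y) : ℂ)) *
        ∏ x, (if netD k x = 0 then ((2*Real.pi : ℝ) : ℂ) else 0) := by
  simp only [F_eq a k]
  rw [MeasureTheory.integral_const_mul]
  congr 1
  rw [integral_prod_eval (fun x t => Complex.exp (Complex.I * (netD k x : ℂ) * (t : ℂ)))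
    (fun x => by continuity)]
  exact Finset.prod_congr rfl fun x _ => integral_factor (netD k x)

end scratch3

section scratch4
variable {X : Type*} [Fintype X] [DecidableEq X]

lemma norm_F (a : Matrix X X ℂ) (k : X → X → ℕ) (θ : X → ℝ) :
    ‖∏ x, ∏ y, (a x y * Complex.exp (Complex.I * ((θ x : ℂ) - (θ y : ℂ)))) ^ k x y
        / (Nat.factorial (k x y) : ℂ)‖
      = ∏ x, ∏ y, ‖a x y‖ ^ k x y / (Nat.factorial (k x y) : ℝ) := by
  rw [norm_prod]
  refine Finset.prod_congr rfl fun x _ => ?_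
  rw [norm_prod]
  refine Finset.prod_congr rfl fun y _ => ?_
  rw [norm_div, norm_pow, norm_mul]
  have h1 : ‖Complex.exp (Complex.I * ((θ x : ℂ) - (θ y : ℂ)))‖ = 1 := by
    rw [show Complex.I * ((θ x : ℂ) - (θ y : ℂ)) = (((θ x - θ y : ℝ)) : ℂ) * Complex.I by
      push_cast; ring]
    rw [Complex.norm_exp_ofReal_mul_I]
  rw [h1, mul_one]
  norm_num

lemma continuous_F (a : Matrix X X ℂ) (k : X → X → ℕ) :
    Continuous (fun θ : X → ℝ => ∏ x, ∏ y,
      (a x y * Complex.exp (Complex.I * ((θ x : ℂ) - (θ y : ℂ)))) ^ k x y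
        / (Nat.factorial (k x y) : ℂ)) := by
  refine continuous_finset_prod _ fun x _ => continuous_finset_prod _ fun y _ => ?_
  refine Continuous.div_const (Continuous.pow ?_ _) _
  exact continuous_const.mul (Complex.continuous_exp.comp (continuous_const.mul
    ((Complex.continuous_ofReal.comp (continuous_apply x)).sub
      (Complex.continuous_ofReal.comp (continuous_apply y)))))

lemma vol_S : (MeasureTheory.volume
      (Set.univ.pi fun _ : X => Set.Icc (0:ℝ) (2*Real.pi))).toReal
    = (2*Real.pi)^(Fintype.card X) := by
  rw [MeasureTheory.volume_pi_pi]
  simp only [Real.volume_Icc, sub_zero, Finset.prod_const, Finset.card_univ]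
  rw [ENNReal.toReal_pow, ENNReal.toReal_ofReal (by positivity : (0:ℝ) ≤ 2*Real.pi)]

end scratch4

section scratch5
variable {X : Type*} [Fintype X] [DecidableEq X]

lemma hpt (a : Matrix X X ℂ) (θ : X → ℝ) :
    HasSum (fun k : X → X → ℕ => ∏ x, ∏ y,
      (a x y * Complex.exp (Complex.I * ((θ x : ℂ) - (θ y : ℂ)))) ^ k x y
        / (Nat.factorial (k x y) : ℂ))
      (Complex.exp (∑ x, ∑ y, a x y * Complex.exp (Complex.I * ((θ x : ℂ) - (θ y : ℂ))))) := by
  have h := hasSum_expand (𝕜 := ℂ)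
    (fun x y => a x y * Complex.exp (Complex.I * ((θ x : ℂ) - (θ y : ℂ))))
  have hv : (∏ x, ∏ y, NormedSpace.exp
        (a x y * Complex.exp (Complex.I * ((θ x : ℂ) - (θ y : ℂ)))))
      = Complex.exp (∑ x, ∑ y, a x y * Complex.exp (Complex.I * ((θ x : ℂ) - (θ y : ℂ)))) := by
    rw [Complex.exp_eq_exp_ℂ]
    simp only [← NormedSpace.exp_sum]
  rw [hv] at h
  exact h
end scratch5


/-- A network on a finite set `X` is a matrix `k : X → X → ℕ` with zero diagonal.
It is *Eulerian* if at every vertex the outgoing and incoming numbers agree. -/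
def IsEulerianNetwork {X : Type*} [Fintype X] (k : X → X → ℕ) : Prop :=
  (∀ x, k x x = 0) ∧ ∀ x, (∑ y, k x y) = ∑ y, k y x

/-- For any complex matrix `a` with zero diagonal,
`(2π)^{-n} ∫_{[0,2π]^n} exp(Σ_{x,y} a_{x,y} e^{i(θ_x-θ_y)}) dθ
  = Σ_{k Eulerian} ∏_{x,y} a_{x,y}^{k_{x,y}}/k_{x,y}!`,
the sum converging (unconditionally, hence absolutely). -/
theorem torus_integral_eq_sum_eulerian
    {X : Type*} [Fintype X] [DecidableEq X]
    (a : Matrix X X ℂ) (hdiag : ∀ x, a x x = 0) :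
    HasSum
      (fun k : {k : X → X → ℕ // IsEulerianNetwork k} =>
        ∏ x, ∏ y, a x y ^ k.1 x y / (Nat.factorial (k.1 x y) : ℂ))
      (((2 * Real.pi) ^ (Fintype.card X))⁻¹ •
        ∫ θ : X → ℝ in Set.univ.pi (fun _ : X => Set.Icc (0:ℝ) (2 * Real.pi)),
          Complex.exp (∑ x, ∑ y, a x y *
            Complex.exp (Complex.I * ((θ x : ℂ) - (θ y : ℂ))))) := by
  classical
  set S : Set (X → ℝ) := Set.univ.pi (fun _ : X => Set.Icc (0:ℝ) (2 * Real.pi)) with hS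
  set F : (X → X → ℕ) → (X → ℝ) → ℂ := fun k θ => ∏ x, ∏ y,
      (a x y * Complex.exp (Complex.I * ((θ x : ℂ) - (θ y : ℂ)))) ^ k x y
        / (Nat.factorial (k x y) : ℂ) with hF
  -- integrability
  have hcompact : IsCompact S := isCompact_univ_pi fun _ => isCompact_Icc
  have hInt : ∀ k : X → X → ℕ, MeasureTheory.Integrable (F k)
      (MeasureTheory.volume.restrict S) :=
    fun k => ((continuous_F a k).continuousOn).integrableOn_compact hcompact
  -- summability of integrals of norms
  have hnis : ∀ k : X → X → ℕ, (∫ θ in S, ‖F k θ‖) =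
      (2*Real.pi)^(Fintype.card X) * ∏ x, ∏ y, ‖a x y‖ ^ k x y / (Nat.factorial (k x y) : ℝ) := by
    intro k
    have : (fun θ : X → ℝ => ‖F k θ‖)
        = fun _ => ∏ x, ∏ y, ‖a x y‖ ^ k x y / (Nat.factorial (k x y) : ℝ) :=
      funext fun θ => norm_F a k θ
    rw [hF] at this
    rw [this, MeasureTheory.setIntegral_const, smul_eq_mul, MeasureTheory.measureReal_def, vol_S]
  have hF_sum : Summable (fun k : X → X → ℕ => ∫ θ, ‖F k θ‖ ∂(MeasureTheory.volume.restrict S)) := by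
    have h2 := ((hasSum_expand (𝕜 := ℝ) (fun x y => ‖a x y‖)).summable).mul_left
      ((2*Real.pi)^(Fintype.card X))
    rw [show (fun k : X → X → ℕ => ∫ θ, ‖F k θ‖ ∂(MeasureTheory.volume.restrict S))
      = fun k => (2*Real.pi)^(Fintype.card X) *
        ∏ x, ∏ y, ‖a x y‖ ^ k x y / (Nat.factorial (k x y) : ℝ) from funext hnis]
    exact h2
  have hB := MeasureTheory.hasSum_integral_of_summable_integral_norm hInt hF_sum
  have hIeq : (∫ θ, (∑' k : X → X → ℕ, F k θ) ∂(MeasureTheory.volume.restrict S))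
      = ∫ θ in S, Complex.exp (∑ x, ∑ y, a x y *
          Complex.exp (Complex.I * ((θ x : ℂ) - (θ y : ℂ)))) := by
    refine MeasureTheory.integral_congr_ae (Filter.Eventually.of_forall fun θ => ?_)
    exact (hpt a θ).tsum_eq
  rw [hIeq] at hB
  -- value of each integral
  have hval : ∀ k : X → X → ℕ, (∫ θ, F k θ ∂(MeasureTheory.volume.restrict S))
      = (∏ x, ∏ y, a x y ^ k x y / (Nat.factorial (k x y) : ℂ)) *
        ∏ x, (if netD k x = 0 then ((2*Real.pi : ℝ) : ℂ) else 0) := fun k => integral_F a k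
  have hsupp : Function.support (fun k : X → X → ℕ =>
      ∫ θ, F k θ ∂(MeasureTheory.volume.restrict S)) ⊆ {k | IsEulerianNetwork k} := by
    intro k hk
    rw [Function.mem_support, hval k] at hk
    have h1 := left_ne_zero_of_mul hk
    have h2 := right_ne_zero_of_mul hk
    constructor
    · intro x
      by_contra hxx
      apply h1
      refine Finset.prod_eq_zero (Finset.mem_univ x) (Finset.prod_eq_zero (Finset.mem_univ x) ?_)
      rw [hdiag x, zero_pow hxx, zero_div]
    · intro x
      have h3 := Finset.prod_ne_zero_iff.mp h2 x (Finset.mem_univ x)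
      by_cases hdx : netD k x = 0
      · have h4 : ((∑ y, k x y : ℕ) : ℤ) = ((∑ y, k y x : ℕ) : ℤ) := by
          have := sub_eq_zero.mp hdx
          exact_mod_cast this
        exact_mod_cast h4
      · simp [hdx] at h3
  have hsub : HasSum (fun k : {k : X → X → ℕ // IsEulerianNetwork k} =>
      ∫ θ, F k.1 θ ∂(MeasureTheory.volume.restrict S))
      (∫ θ in S, Complex.exp (∑ x, ∑ y, a x y *
          Complex.exp (Complex.I * ((θ x : ℂ) - (θ y : ℂ))))) :=
    (hasSum_subtype_iff_of_support_subset hsupp).mpr hB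
  have hval2 : ∀ k : {k : X → X → ℕ // IsEulerianNetwork k},
      (∫ θ, F k.1 θ ∂(MeasureTheory.volume.restrict S))
        = ((2*Real.pi)^(Fintype.card X) : ℝ) •
          (∏ x, ∏ y, a x y ^ k.1 x y / (Nat.factorial (k.1 x y) : ℂ)) := by
    intro k
    rw [hval k.1]
    have hd : ∀ x, netD k.1 x = 0 := fun x => by
      simp [netD, k.2.2 x]
    simp only [hd, if_true, eq_self_iff_true, Finset.prod_const, Finset.card_univ]
    rw [Complex.real_smul]
    push_cast
    ring
  simp only [hval2] at hsub
  have hne : ((2*Real.pi)^(Fintype.card X) : ℝ) ≠ 0 := by positivity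
  have hfinal := hsub.const_smul (((2*Real.pi)^(Fintype.card X) : ℝ))⁻¹
  simp only [smul_smul, inv_mul_cancel₀ hne, one_smul] at hfinal
  exact hfinal
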